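/- Suppose M = m − 2n ∉ {0, −2, −4, …}. For all integers k ≥ 2 and l ≥ 1 with k + l even, setting s = (k + l)/2 and assuming s + M/2 − 1 ≠ 0, the coefficients α_l satisfy the recursion α_l(t^k) = (k/(4s(s + M/2 − 1))) · ( (k−1)·α_l(t^{k−2}) + 2l·α_{l−1}(t^{k−1}) ). -/

import Mathlib

set_option synthInstance.maxHeartbeats 1000000
set_option maxHeartbeats 1000000

open scoped TensorProduct

noncomputable section

namespace Super

/-- The algebra of ordinary polynomials in `m` commuting variables. -/
abbrev Poly (m : ℕ) := MvPolynomial (Fin m) ℝ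

/-- The Grassmann algebra on `2n` anticommuting generators. -/
abbrev Grass (n : ℕ) := ExteriorAlgebra ℝ (Fin (2 * n) → ℝ)

/-- The algebra `𝒫` of superpolynomials. -/
abbrev P (m n : ℕ) := Poly m ⊗[ℝ] Grass n

variable (m n : ℕ)

/-- The anticommuting generator `x̀_j` (0-indexed). -/
def gg (j : Fin (2 * n)) : Grass n := ExteriorAlgebra.ι ℝ (Pi.single j 1)

/-- The odd derivation `∂_{x̀_j}` on the Grassmann algebra: contraction with the
`j`-th dual basis vector. -/
def gd (j : Fin (2 * n)) : Module.End ℝ (Grass n) :=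
  CliffordAlgebra.contractLeft (LinearMap.proj j)

def idx0 (j : Fin n) : Fin (2 * n) := ⟨2 * j.val, by have := j.isLt; omega⟩
def idx1 (j : Fin n) : Fin (2 * n) := ⟨2 * j.val + 1, by have := j.isLt; omega⟩

/-- `∂_{x_i}` acting on superpolynomials. -/
def dx (i : Fin m) : Module.End ℝ (P m n) :=
  TensorProduct.map (MvPolynomial.pderiv i).toLinearMap LinearMap.id

/-- `∂_{x̀_j}` acting on superpolynomials. -/
def dg (j : Fin (2 * n)) : Module.End ℝ (P m n) :=
  TensorProduct.map LinearMap.id (gd n j)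

/-- multiplication by `x_i`. -/
def mulX (i : Fin m) : Module.End ℝ (P m n) :=
  LinearMap.mulLeft ℝ ((MvPolynomial.X i : Poly m) ⊗ₜ (1 : Grass n))

/-- multiplication by `x̀_j`. -/
def mulG (j : Fin (2 * n)) : Module.End ℝ (P m n) :=
  LinearMap.mulLeft ℝ ((1 : Poly m) ⊗ₜ gg n j)

/-- The super-Laplace operator
`Δ = 4 ∑_{j=1}^n ∂_{x̀_{2j-1}} ∂_{x̀_{2j}} - ∑_{i=1}^m ∂_{x_i}²` (written 0-indexed). -/
def Delta : Module.End ℝ (P m n) :=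
  4 • (∑ j : Fin n, dg m n (idx0 n j) ∘ₗ dg m n (idx1 n j)) -
    ∑ i : Fin m, dx m n i ∘ₗ dx m n i

/-- The super-Euler operator `𝔼 = ∑ x_i ∂_{x_i} + ∑ x̀_j ∂_{x̀_j}`. -/
def Euler : Module.End ℝ (P m n) :=
  ∑ i : Fin m, mulX m n i ∘ₗ dx m n i + ∑ j : Fin (2 * n), mulG m n j ∘ₗ dg m n j

/-- The even element `x² = ∑_{j=1}^n x̀_{2j-1} x̀_{2j} - ∑_{i=1}^m x_i²`. -/
def xsq : P m n :=
  (1 : Poly m) ⊗ₜ (∑ j : Fin n, gg n (idx0 n j) * gg n (idx1 n j)) -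
    ∑ i : Fin m, (MvPolynomial.X i * MvPolynomial.X i : Poly m) ⊗ₜ (1 : Grass n)

/-- The superdimension `M = m - 2n`. -/
def Mdim : ℤ := (m : ℤ) - 2 * n

/-- Evaluation at the origin: the constant term of a superpolynomial. -/
def eval0 : P m n →ₗ[ℝ] ℝ :=
  (TensorProduct.lid ℝ ℝ).toLinearMap ∘ₗ
    TensorProduct.map (MvPolynomial.aeval (fun _ : Fin m => (0 : ℝ))).toLinearMap
      (ExteriorAlgebra.algebraMapInv).toLinearMap

/-- `𝒫_k`, the space of homogeneous superpolynomials of degree `k`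
(the eigenspace of `𝔼` with eigenvalue `k`). -/
def Pk (k : ℕ) : Submodule ℝ (P m n) :=
  LinearMap.ker (Euler m n - (k : ℝ) • LinearMap.id)

/-- `ℋ_k`, the space of spherical harmonics of degree `k`. -/
def Hk (k : ℕ) : Submodule ℝ (P m n) :=
  Pk m n k ⊓ LinearMap.ker (Delta m n)

/-- The integral over the supersphere (Pizzetti formula with `m` replaced by `M`).
Terms where `k + M/2` is a pole of `Γ` vanish automatically since `Real.Gamma`
is zero at nonpositive integers. -/
def SS (R : P m n) : ℝ :=
  ∑' k : ℕ, (-1 : ℝ) ^ k * (2 * Real.pi ^ ((Mdim m n : ℝ) / 2)) /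
      (4 ^ k * k.factorial * Real.Gamma ((k : ℝ) + (Mdim m n : ℝ) / 2)) *
    eval0 m n ((Delta m n ^ k) R)

/-- The integral over the superball. -/
def SB (R : P m n) : ℝ :=
  ∑' k : ℕ, (-1 : ℝ) ^ k * Real.pi ^ ((Mdim m n : ℝ) / 2) /
      (4 ^ k * k.factorial * Real.Gamma ((k : ℝ) + (Mdim m n : ℝ) / 2 + 1)) *
    eval0 m n ((Delta m n ^ k) R)

/-- The super Laplace–Beltrami operator `Δ_LB = x²Δ - 𝔼(M - 2 + 𝔼)`. -/
def DeltaLB : Module.End ℝ (P m n) :=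
  LinearMap.mulLeft ℝ (xsq m n) ∘ₗ Delta m n -
    Euler m n ∘ₗ (((Mdim m n : ℝ) - 2) • LinearMap.id + Euler m n)

end Super
namespace Super

/-- The Funk–Hecke coefficient `α_l(t^k)`:
`(k!/(k-l)!)·(2π^{(M-1)/2}/2^l)·Γ((k-l+1)/2)/Γ((M+k+l)/2)` if `k + l` is even and
`k ≥ l`, and `0` otherwise. -/
noncomputable def alphaC (m n : ℕ) (l k : ℕ) : ℝ :=
  if Even (k + l) ∧ l ≤ k then
    (k.factorial : ℝ) / ((k - l).factorial : ℝ) *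
      (2 * Real.pi ^ (((Mdim m n : ℝ) - 1) / 2) / 2 ^ l) *
      (Real.Gamma (((k : ℝ) - (l : ℝ) + 1) / 2) /
        Real.Gamma (((Mdim m n : ℝ) + (k : ℝ) + (l : ℝ)) / 2))
  else 0

end Super

lemma aux0 (K L MM Fk F P T X Y : ℝ) (h1 : K - L ≠ 0) (h2 : K - L - 1 ≠ 0)
    (h3 : K + L ≠ 0) (h4 : MM + K + L - 2 ≠ 0) (hF : F ≠ 0) (hT : T ≠ 0) (hY : Y ≠ 0) :
    K * ((K - 1) * Fk) / ((K - L) * ((K - L - 1) * F)) * (2 * P / (2 * T)) *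
      ((K - L - 1) / 2 * X / (((MM + K + L) / 2 - 1) * Y)) =
    K / (4 * ((K + L) / 2) * ((K + L) / 2 + MM / 2 - 1)) *
      ((K - 1) * (Fk / F * (2 * P / (2 * T)) * (X / Y)) +
        2 * L * ((K - 1) * Fk / ((K - L) * ((K - L - 1) * F)) * (2 * P / T) *
          ((K - L - 1) / 2 * X / Y))) := by
  rw [show (MM + K + L) / 2 - 1 = (MM + K + L - 2) / 2 from by ring,
    show 4 * ((K + L) / 2) * ((K + L) / 2 + MM / 2 - 1) = (K + L) * (MM + K + L - 2) from by ring]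
  field_simp
  ring

lemma aux1 (K MM Fk P T X Y : ℝ) (h3 : K + K ≠ 0) (h4 : MM + K + K - 2 ≠ 0)
    (hT : T ≠ 0) (hY : Y ≠ 0) :
    K * ((K - 1) * Fk) / 1 * (2 * P / (2 * T)) * (X / (((MM + K + K) / 2 - 1) * Y)) =
    K / (4 * ((K + K) / 2) * ((K + K) / 2 + MM / 2 - 1)) *
      ((K - 1) * 0 + 2 * K * ((K - 1) * Fk / 1 * (2 * P / T) * (X / Y))) := by
  rw [show (MM + K + K) / 2 - 1 = (MM + K + K - 2) / 2 from by ring,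
    show 4 * ((K + K) / 2) * ((K + K) / 2 + MM / 2 - 1) = (K + K) * (MM + K + K - 2) from by ring]
  have hK : K ≠ 0 := fun h => h3 (by rw [h]; ring)
  field_simp
  ring

/-- For `M ∉ {0, -2, -4, …}`, `k ≥ 2`, `l ≥ 1`, `k + l` even,
`s = (k+l)/2` and `s + M/2 - 1 ≠ 0`, the recursion
`α_l(t^k) = (k/(4s(s + M/2 - 1)))·((k-1)·α_l(t^{k-2}) + 2l·α_{l-1}(t^{k-1}))` holds. -/
theorem alpha_recursion (m n : ℕ)
    (hM : ∀ t : ℕ, Super.Mdim m n ≠ -(2 * (t : ℤ)))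
    (k l : ℕ) (hk : 2 ≤ k) (hl : 1 ≤ l) (he : Even (k + l))
    (s : ℝ) (hs : s = ((k : ℝ) + (l : ℝ)) / 2)
    (hs0 : s + (Super.Mdim m n : ℝ) / 2 - 1 ≠ 0) :
    Super.alphaC m n l k =
      (k : ℝ) / (4 * s * (s + (Super.Mdim m n : ℝ) / 2 - 1)) *
        (((k : ℝ) - 1) * Super.alphaC m n l (k - 2) +
          2 * (l : ℝ) * Super.alphaC m n (l - 1) (k - 1)) := by
  obtain ⟨v, hv⟩ := he
  have hy : s + ((Super.Mdim m n : ℝ)) / 2 - 1 = (((Super.Mdim m n : ℝ)) + (k:ℝ) + (l:ℝ)) / 2 - 1 := by rw [hs]; ring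
  have hy0 : (((Super.Mdim m n : ℝ)) + (k:ℝ) + (l:ℝ)) / 2 - 1 ≠ 0 := hy ▸ hs0
  have hG2ne : Real.Gamma ((((Super.Mdim m n : ℝ)) + (k:ℝ) + (l:ℝ)) / 2 - 1) ≠ 0 := by
    refine Real.Gamma_ne_zero fun j hj => ?_
    have hR : ((Super.Mdim m n : ℝ)) = 2 - 2*(j:ℝ) - (k:ℝ) - (l:ℝ) := by
      have := hj; field_simp at this; linarith
    have hZ : Super.Mdim m n = 2 - 2*(j:ℤ) - (k:ℤ) - (l:ℤ) := by
      have h2 : (Super.Mdim m n : ℝ) = ((2 - 2*(j:ℤ) - (k:ℤ) - (l:ℤ) : ℤ) : ℝ) := by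
        push_cast; linarith [hR]
      exact_mod_cast h2
    exact hM (j + v - 1) (by omega)
  have hG2 : Real.Gamma ((((Super.Mdim m n : ℝ)) + (k:ℝ) + (l:ℝ)) / 2) =
      ((((Super.Mdim m n : ℝ)) + (k:ℝ) + (l:ℝ)) / 2 - 1) * Real.Gamma ((((Super.Mdim m n : ℝ)) + (k:ℝ) + (l:ℝ)) / 2 - 1) := by
    have h := Real.Gamma_add_one hy0
    rw [show (((Super.Mdim m n : ℝ)) + (k:ℝ) + (l:ℝ)) / 2 - 1 + 1 = (((Super.Mdim m n : ℝ)) + (k:ℝ) + (l:ℝ)) / 2 from by ring] at h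
    exact h
  by_cases hlk : l ≤ k
  · by_cases hlk2 : l ≤ k - 2
    · -- main case
      have c0 : Even (k + l) ∧ l ≤ k := ⟨⟨v, hv⟩, hlk⟩
      have c1 : Even (k - 2 + l) ∧ l ≤ k - 2 := ⟨⟨v - 1, by omega⟩, hlk2⟩
      have c2 : Even (k - 1 + (l - 1)) ∧ l - 1 ≤ k - 1 := ⟨⟨v - 1, by omega⟩, by omega⟩
      simp only [Super.alphaC, if_pos c0, if_pos c1, if_pos c2]
      -- cast rewrites
      have ck2 : ((k - 2 : ℕ) : ℝ) = (k:ℝ) - 2 := by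
        rw [Nat.cast_sub hk]; norm_num
      have ck1 : ((k - 1 : ℕ) : ℝ) = (k:ℝ) - 1 := by
        rw [Nat.cast_sub (by omega)]; norm_num
      have cl1 : ((l - 1 : ℕ) : ℝ) = (l:ℝ) - 1 := by
        rw [Nat.cast_sub hl]; norm_num
      rw [ck2, ck1, cl1]
      rw [show k - 2 - l = k - l - 2 from by omega, show k - 1 - (l - 1) = k - l from by omega]
      -- Gamma rewrites
      have hG1 : Real.Gamma (((k:ℝ) - (l:ℝ) + 1) / 2) =
          (((k:ℝ) - (l:ℝ) - 1) / 2) * Real.Gamma (((k:ℝ) - 2 - (l:ℝ) + 1) / 2) := by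
        have hne : ((k:ℝ) - (l:ℝ) - 1) / 2 ≠ 0 := by
          have h2 : l + 2 ≤ k := by omega
          have h3 := Nat.cast_le (α := ℝ).mpr h2
          push_cast at h3
          have : (0:ℝ) < ((k:ℝ) - (l:ℝ) - 1) / 2 := by linarith
          exact this.ne'
        have h := Real.Gamma_add_one hne
        rw [show ((k:ℝ) - (l:ℝ) - 1) / 2 + 1 = ((k:ℝ) - (l:ℝ) + 1) / 2 from by ring,
          show ((k:ℝ) - (l:ℝ) - 1) / 2 = ((k:ℝ) - 2 - (l:ℝ) + 1) / 2 from by ring] at h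
        rw [h]
        ring
      have harg1 : (((Super.Mdim m n : ℝ)) + ((k:ℝ) - 2) + (l:ℝ)) / 2 = (((Super.Mdim m n : ℝ)) + (k:ℝ) + (l:ℝ)) / 2 - 1 := by ring
      have harg2 : (((Super.Mdim m n : ℝ)) + ((k:ℝ) - 1) + ((l:ℝ) - 1)) / 2 = (((Super.Mdim m n : ℝ)) + (k:ℝ) + (l:ℝ)) / 2 - 1 := by ring
      have harg3 : ((k:ℝ) - 1 - ((l:ℝ) - 1) + 1) / 2 = ((k:ℝ) - (l:ℝ) + 1) / 2 := by ring
      rw [harg1, harg2, harg3, hG1, hG2]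
      -- factorial rewrites
      have hf1 : (k.factorial : ℝ) = (k:ℝ) * (((k:ℝ) - 1) * ((k - 2).factorial : ℝ)) := by
        rw [show k = k - 2 + 1 + 1 from by omega, Nat.factorial_succ, Nat.factorial_succ]
        rw [show k - 2 + 1 + 1 - 2 = k - 2 from by omega]
        push_cast
        rw [show ((k - 2 : ℕ) : ℝ) = (k:ℝ) - 2 from ck2]
        ring
      have hf1' : ((k - 1).factorial : ℝ) = ((k:ℝ) - 1) * ((k - 2).factorial : ℝ) := by
        rw [show k - 1 = k - 2 + 1 from by omega, Nat.factorial_succ]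
        push_cast
        rw [show ((k - 2 : ℕ) : ℝ) = (k:ℝ) - 2 from ck2]
        ring
      have hf2 : ((k - l).factorial : ℝ) =
          ((k:ℝ) - (l:ℝ)) * (((k:ℝ) - (l:ℝ) - 1) * ((k - l - 2).factorial : ℝ)) := by
        rw [show k - l = k - l - 2 + 1 + 1 from by omega, Nat.factorial_succ, Nat.factorial_succ]
        rw [show k - l - 2 + 1 + 1 - 2 = k - l - 2 from by omega]
        have : ((k - l - 2 : ℕ) : ℝ) = (k:ℝ) - (l:ℝ) - 2 := by
          rw [Nat.cast_sub (by omega), Nat.cast_sub hlk]; norm_num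
        push_cast [this]
        ring
      rw [hf1, hf1', hf2]
      have hklR : (2:ℝ) ≤ (k:ℝ) - (l:ℝ) := by
        have h2 : l + 2 ≤ k := by omega
        have h3 := Nat.cast_le (α := ℝ).mpr h2
        push_cast at h3; linarith
      have hp2 : (2:ℝ) ^ l = 2 * 2 ^ (l - 1) := by
        conv_lhs => rw [show l = l - 1 + 1 from by omega]
        rw [pow_succ]; ring
      rw [hp2, hs]
      have hG1ne : Real.Gamma (((k:ℝ) - 2 - (l:ℝ) + 1) / 2) ≠ 0 := by
        refine (Real.Gamma_pos_of_pos ?_).ne'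
        linarith
      have hFne : ((k - l - 2).factorial : ℝ) ≠ 0 := by
        exact_mod_cast (Nat.factorial_pos _).ne'
      have hklne : (k:ℝ) - (l:ℝ) ≠ 0 := by linarith
      have hkl1ne : (k:ℝ) - (l:ℝ) - 1 ≠ 0 := by linarith
      have hklsum : (k:ℝ) + (l:ℝ) ≠ 0 := by positivity
      have hpine : Real.pi ^ (((Super.Mdim m n : ℝ) - 1) / 2) ≠ 0 :=
        (Real.rpow_pos_of_pos Real.pi_pos _).ne'
      have h2ne : (2:ℝ) ^ (l - 1) ≠ 0 := by positivity
      exact aux0 (k:ℝ) (l:ℝ) ((Super.Mdim m n : ℝ)) _ _ _ _ _ _ hklne hkl1ne hklsum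
        (fun h => hy0 (by linarith)) hFne h2ne hG2ne
    · -- l = k case
      have hlek : l = k := by omega
      subst hlek
      have c0 : Even (l + l) ∧ l ≤ l := ⟨⟨l, rfl⟩, le_rfl⟩
      have c2 : Even (l - 1 + (l - 1)) ∧ l - 1 ≤ l - 1 := ⟨⟨l - 1, by omega⟩, le_rfl⟩
      have h1 : ¬ (Even (l - 2 + l) ∧ l ≤ l - 2) := fun h => hlk2 h.2
      simp only [Super.alphaC, if_pos c0, if_pos c2, if_neg h1]
      rw [show l - l = 0 from by omega, show l - 1 - (l - 1) = 0 from by omega]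
      simp only [Nat.factorial_zero, Nat.cast_one]
      have cl1 : ((l - 1 : ℕ) : ℝ) = (l:ℝ) - 1 := by
        rw [Nat.cast_sub hl]; norm_num
      rw [cl1]
      rw [show ((l:ℝ) - 1 - ((l:ℝ) - 1) + 1) / 2 = ((l:ℝ) - (l:ℝ) + 1) / 2 from by ring,
        show ((Super.Mdim m n : ℝ) + ((l:ℝ) - 1) + ((l:ℝ) - 1)) / 2
          = ((Super.Mdim m n : ℝ) + (l:ℝ) + (l:ℝ)) / 2 - 1 from by ring,
        hG2]
      have hf1 : (l.factorial : ℝ) = (l:ℝ) * (((l:ℝ) - 1) * ((l - 2).factorial : ℝ)) := by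
        rw [show l = l - 2 + 1 + 1 from by omega, Nat.factorial_succ, Nat.factorial_succ]
        rw [show l - 2 + 1 + 1 - 2 = l - 2 from by omega]
        push_cast
        rw [show ((l - 2 : ℕ) : ℝ) = (l:ℝ) - 2 from by rw [Nat.cast_sub hk]; norm_num]
        ring
      have hf1' : ((l - 1).factorial : ℝ) = ((l:ℝ) - 1) * ((l - 2).factorial : ℝ) := by
        rw [show l - 1 = l - 2 + 1 from by omega, Nat.factorial_succ]
        push_cast
        rw [show ((l - 2 : ℕ) : ℝ) = (l:ℝ) - 2 from by rw [Nat.cast_sub hk]; norm_num]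
        ring
      have hp2 : (2:ℝ) ^ l = 2 * 2 ^ (l - 1) := by
        conv_lhs => rw [show l = l - 1 + 1 from by omega]
        rw [pow_succ]; ring
      rw [hf1, hf1', hp2, hs]
      have hK2 : (2:ℝ) ≤ (l:ℝ) := by exact_mod_cast hk
      exact aux1 (l:ℝ) ((Super.Mdim m n : ℝ)) _ _ _ _ _ (by linarith)
        (fun h => hy0 (by linarith)) (by positivity) hG2ne
  · -- l > k : everything vanishes
    have h0 : ¬ (Even (k + l) ∧ l ≤ k) := by tauto
    have h1 : ¬ (Even (k - 2 + l) ∧ l ≤ k - 2) := by rintro ⟨-, h⟩; omega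
    have h2 : ¬ (Even (k - 1 + (l - 1)) ∧ l - 1 ≤ k - 1) := by
      rintro ⟨hpar, h⟩
      obtain ⟨w, hw⟩ := hpar
      omega
    simp only [Super.alphaC, if_neg h0, if_neg h1, if_neg h2]
    ring
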